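/- arXiv:2008.05429 — 3 statements merged into one kernel-verified Lean document; each statement's English description precedes it below -/
import Mathlib

section
/- Let G be a first-countable topological group, Γ ≤ G a subgroup, (g_n) a sequence in G, and h ∈ G such that g_nΓ → hΓ in the coset space G⧸Γ with the quotient topology. Then for every γ ∈ Γ, the element h γ h⁻¹ belongs to ⋂_{N ∈ ℕ} closure( ⋃_{n ≥ N} { g_n γ' g_n⁻¹ : γ' ∈ Γ } ). In particular this limsup set contains the conjugate subgroup hΓh⁻¹. -/
open Filter Topology

/-- If g_nΓ → hΓ in G⧸Γ (G a first-countable topological group), then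
for every γ ∈ Γ the conjugate hγh⁻¹ lies in the topological limsup
⋂_N closure(⋃_{n ≥ N} g_nΓg_n⁻¹); in particular this limsup set contains hΓh⁻¹. -/
theorem conj_subgroup_subset_limsup_of_tendsto_coset {G : Type*} [Group G]
    [TopologicalSpace G] [IsTopologicalGroup G] [FirstCountableTopology G]
    (Γ : Subgroup G) (g : ℕ → G) (h : G)
    (hconv : Tendsto (fun n => ((g n : G) : G ⧸ Γ)) atTop (nhds ((h : G) : G ⧸ Γ))) :
    ∀ γ ∈ Γ, h * γ * h⁻¹ ∈
      ⋂ N : ℕ, closure (⋃ n ∈ Set.Ici N, {x : G | ∃ γ' ∈ Γ, x = g n * γ' * (g n)⁻¹}) := by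
  intro γ hγ
  rw [Set.mem_iInter]
  intro N
  rw [mem_closure_iff]
  intro o ho hmo
  -- V = preimage of o under conjugation map
  have hc : Continuous fun x : G => x * γ * x⁻¹ := by continuity
  set V : Set G := (fun x : G => x * γ * x⁻¹) ⁻¹' o with hV
  have hVopen : IsOpen V := ho.preimage hc
  have hhV : h ∈ V := hmo
  have hopen : IsOpen ((QuotientGroup.mk : G → G ⧸ Γ) '' V) :=
    QuotientGroup.isOpenMap_coe V hVopen
  have hmem : ((h : G) : G ⧸ Γ) ∈ (QuotientGroup.mk : G → G ⧸ Γ) '' V :=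
    ⟨h, hhV, rfl⟩
  have hev : ∀ᶠ n in atTop, ((g n : G) : G ⧸ Γ) ∈ (QuotientGroup.mk : G → G ⧸ Γ) '' V :=
    hconv.eventually (hopen.mem_nhds hmem)
  obtain ⟨n, hn1, hn2⟩ := (hev.and (eventually_ge_atTop N)).exists
  obtain ⟨v, hvV, hveq⟩ := hn1
  have hδ : (g n)⁻¹ * v ∈ Γ := by
    rw [← QuotientGroup.eq]
    exact hveq.symm
  refine ⟨v * γ * v⁻¹, hvV, ?_⟩
  refine Set.mem_biUnion hn2 ?_
  refine ⟨(g n)⁻¹ * v * γ * ((g n)⁻¹ * v)⁻¹, ?_, ?_⟩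
  · exact Γ.mul_mem (Γ.mul_mem hδ hγ) (Γ.inv_mem hδ)
  · group
end

section
/- Let G be a locally compact second-countable Hausdorff topological group, Γ ≤ G a discrete subgroup, Γ' a normal subgroup of Γ of finite index, H ≤ G a subgroup, and π : G⧸Γ' → G⧸Γ the natural projection. The finite group F = Γ⧸Γ' acts on G⧸Γ' on the right by (gΓ') · (γΓ') = gγΓ', and this action commutes with the left translation action of G. Let F₀ ⊆ G⧸Γ' be a Borel set meeting every F-orbit exactly once, and let μ be an H-invariant Radon measure on G⧸Γ. Then the assignment ν(B) = Σ_{ξ ∈ F} μ( π( B ∩ F₀ · ξ ) ) (for Borel B ⊆ G⧸Γ'; each image π(B ∩ F₀·ξ) is Borel since π is injective on F₀·ξ) defines a Radon measure ν on G⧸Γ' that is invariant under the right F-action and under the left H-action, and satisfies Measure.map π ν = [Γ : Γ'] • μ. -/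
open MeasureTheory Pointwise

/-- Radon measure: finite on compacts and inner regular w.r.t. compact sets -/
def IsRadon {X : Type*} [TopologicalSpace X] [MeasurableSpace X] (μ : Measure X) : Prop :=
  (∀ K : Set X, IsCompact K → μ K < ⊤) ∧
  (∀ s : Set X, MeasurableSet s →
    μ s = ⨆ (K : Set X) (_ : IsCompact K) (_ : K ⊆ s), μ K)

/-- the natural projection `G⧸Γ' → G⧸Γ` for `Γ' ≤ Γ`, sending `gΓ'` to `gΓ`. -/
def cosetProj {G : Type*} [Group G] {Γ' Γ : Subgroup G} (hle : Γ' ≤ Γ) :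
    G ⧸ Γ' → G ⧸ Γ :=
  Quotient.map' id (fun _ _ hab =>
    QuotientGroup.leftRel_apply.mpr (hle (QuotientGroup.leftRel_apply.mp hab)))

/-- the right translation `gΓ' ↦ gγΓ'` on `G⧸Γ'` by an element `γ ∈ Γ`; it is
well defined because `Γ'` is normal in `Γ`, and it descends to an action of the
finite group `F = Γ⧸Γ'`. -/
def rightDeck {G : Type*} [Group G] {Γ' Γ : Subgroup G} (hle : Γ' ≤ Γ)
    (hnormal : (Γ'.subgroupOf Γ).Normal) (γ : Γ) : G ⧸ Γ' → G ⧸ Γ' :=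
  Quotient.map' (fun g => g * γ) (fun a b hab => QuotientGroup.leftRel_apply.mpr (by
    have h1 : a⁻¹ * b ∈ Γ' := QuotientGroup.leftRel_apply.mp hab
    have h2 : γ⁻¹ * (⟨a⁻¹ * b, hle h1⟩ : Γ) * γ⁻¹⁻¹ ∈ Γ'.subgroupOf Γ :=
      hnormal.conj_mem ⟨a⁻¹ * b, hle h1⟩
        (by simpa [Subgroup.mem_subgroupOf] using h1) γ⁻¹
    have h3 : (γ : G)⁻¹ * (a⁻¹ * b) * γ ∈ Γ' := by
      simpa [Subgroup.mem_subgroupOf, mul_assoc] using h2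
    simpa [mul_inv_rev, mul_assoc] using h3))

/-- the translate `F₀ · ξ` of a fundamental set `F₀ ⊆ G⧸Γ'` by a class
`ξ ∈ F = Γ⧸Γ'` (as a union over representatives; all representatives give the
same translate). -/
def fundTranslate {G : Type*} [Group G] {Γ' Γ : Subgroup G} (hle : Γ' ≤ Γ)
    (hnormal : (Γ'.subgroupOf Γ).Normal) (F₀ : Set (G ⧸ Γ'))
    (ξ : Γ ⧸ Γ'.subgroupOf Γ) : Set (G ⧸ Γ') :=
  ⋃ γ : Γ, ⋃ (_ : (γ : Γ ⧸ Γ'.subgroupOf Γ) = ξ), rightDeck hle hnormal γ '' F₀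

section AuxTop

/-- A locally compact second-countable Hausdorff space is Polish. -/
theorem aux_polish (X : Type*) [TopologicalSpace X] [LocallyCompactSpace X]
    [SecondCountableTopology X] [T2Space X] : PolishSpace X := by
  letI : MetricSpace X := TopologicalSpace.metrizableSpaceMetric X
  haveI : TopologicalSpace.SeparableSpace (UniformSpace.Completion X) :=
    UniformSpace.Completion.denseRange_coe.separableSpace
      (UniformSpace.Completion.continuous_coe X)
  haveI : PolishSpace (UniformSpace.Completion X) := inferInstance
  have hiso : Isometry ((↑) : X → UniformSpace.Completion X) :=
    UniformSpace.Completion.coe_isometry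
  have hemb := hiso.isEmbedding
  have hopen : IsOpen (Set.range ((↑) : X → UniformSpace.Completion X)) := by
    rw [Metric.isOpen_iff]
    rintro _ ⟨x, rfl⟩
    obtain ⟨K, hKc, hKn⟩ := exists_compact_mem_nhds x
    obtain ⟨ε, hε, hball⟩ := Metric.mem_nhds_iff.mp hKn
    refine ⟨ε / 2, half_pos hε, ?_⟩
    intro y hy
    have h1 : y ∈ closure (((↑) : X → UniformSpace.Completion X) '' Metric.ball x ε) := by
      rw [Metric.mem_closure_iff]
      intro δ hδ
      obtain ⟨w, hw⟩ := Metric.denseRange_iff.mp UniformSpace.Completion.denseRange_coe y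
        (min δ (ε / 2)) (lt_min hδ (half_pos hε))
      refine ⟨w, ⟨w, ?_, rfl⟩, lt_of_lt_of_le hw (min_le_left _ _)⟩
      have hdx : dist (w : UniformSpace.Completion X) (x : UniformSpace.Completion X) < ε := by
        calc dist (w : UniformSpace.Completion X) (x : UniformSpace.Completion X)
            ≤ dist (w : UniformSpace.Completion X) y + dist y (x : UniformSpace.Completion X) :=
              dist_triangle _ _ _
          _ < ε / 2 + ε / 2 := by
              have := lt_of_lt_of_le hw (min_le_right _ _)
              rw [dist_comm] at this
              exact add_lt_add this (by simpa [Metric.mem_ball] using hy)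
          _ = ε := by ring
      rw [Metric.mem_ball, ← hiso.dist_eq w x] at *
      exact hdx
    have h2 : IsClosed (((↑) : X → UniformSpace.Completion X) '' K) :=
      (hKc.image (UniformSpace.Completion.continuous_coe X)).isClosed
    have h3 : y ∈ ((↑) : X → UniformSpace.Completion X) '' K :=
      h2.closure_subset (closure_mono (Set.image_mono hball) h1)
    exact ⟨h3.choose, h3.choose_spec.2⟩
  haveI : PolishSpace (Set.range ((↑) : X → UniformSpace.Completion X)) := hopen.polishSpace
  exact hemb.toHomeomorph.isClosedEmbedding.polishSpace

/-- The coset space of a closed subgroup is Hausdorff. -/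
theorem aux_t2 {G : Type*} [Group G] [TopologicalSpace G] [IsTopologicalGroup G] (Γ : Subgroup G)
    (hc : IsClosed (Γ : Set G)) : T2Space (G ⧸ Γ) := by
  rw [t2_iff_isClosed_diagonal]
  have hR : IsClosed {p : G × G | p.1⁻¹ * p.2 ∈ Γ} :=
    hc.preimage (by fun_prop : Continuous fun p : G × G => p.1⁻¹ * p.2)
  have hkey : (Set.diagonal (G ⧸ Γ))ᶜ =
      Prod.map (QuotientGroup.mk : G → G ⧸ Γ) QuotientGroup.mk ''
        {p : G × G | p.1⁻¹ * p.2 ∈ Γ}ᶜ := by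
    ext ⟨u, v⟩
    constructor
    · intro huv
      obtain ⟨a, rfl⟩ := QuotientGroup.mk_surjective u
      obtain ⟨b, rfl⟩ := QuotientGroup.mk_surjective v
      refine ⟨(a, b), ?_, rfl⟩
      intro hab
      exact huv (QuotientGroup.eq.mpr hab)
    · rintro ⟨⟨a, b⟩, hab, heq⟩ h
      rw [Prod.map_apply] at heq
      obtain ⟨h1, h2⟩ := Prod.mk_inj.mp heq
      rw [← h1, ← h2] at h
      exact hab (QuotientGroup.eq.mp h)
  rw [← isOpen_compl_iff, hkey]
  exact (QuotientGroup.isOpenMap_coe.prodMap QuotientGroup.isOpenMap_coe) _ hR.isOpen_compl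

/-- Decomposing the measure of an injective image along a measurable partition. -/
theorem aux_decomp {α β ι : Type*} [Countable ι] [MeasurableSpace β] (μ : Measure β) (f : α → β)
    (T : Set α) (hinj : Set.InjOn f T) (Q : ι → Set α) (hcov : (⋃ η, Q η) = Set.univ)
    (hdisj : Pairwise (Function.onFun Disjoint Q))
    (hmeas : ∀ η, MeasurableSet (f '' (T ∩ Q η))) :
    μ (f '' T) = ∑' η, μ (f '' (T ∩ Q η)) := by
  have h1 : f '' T = ⋃ η, f '' (T ∩ Q η) := by
    rw [← Set.image_iUnion, ← Set.inter_iUnion, hcov, Set.inter_univ]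
  rw [h1, measure_iUnion ?_ hmeas]
  intro i j hij
  rw [Function.onFun, Set.disjoint_left]
  rintro _ ⟨x, hx, rfl⟩ ⟨y, hy, hxy⟩
  have e : y = x := hinj hy.1 hx.1 hxy
  exact Set.disjoint_left.mp (hdisj hij) hx.2 (e ▸ hy.2)

end AuxTop

section Basic
variable {G : Type*} [Group G] {Γ' Γ : Subgroup G} (hle : Γ' ≤ Γ)
    (hnormal : (Γ'.subgroupOf Γ).Normal)

theorem rightDeck_mk (γ : Γ) (a : G) :
    rightDeck hle hnormal γ (a : G ⧸ Γ') = ((a * γ : G) : G ⧸ Γ') := rfl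

theorem cosetProj_mk (a : G) : cosetProj hle (a : G ⧸ Γ') = (a : G ⧸ Γ) := rfl

theorem smul_mk' (g a : G) : g • ((a : G ⧸ Γ')) = ((g * a : G) : G ⧸ Γ') :=
  MulAction.Quotient.smul_mk _ _ _

theorem rightDeck_comp (γ δ : Γ) (x : G ⧸ Γ') :
    rightDeck hle hnormal γ (rightDeck hle hnormal δ x) = rightDeck hle hnormal (δ * γ) x := by
  induction x using Quotient.inductionOn' with
  | h a => simp [rightDeck_mk, ← QuotientGroup.mk'_apply, mul_assoc]

theorem rightDeck_one (x : G ⧸ Γ') : rightDeck hle hnormal 1 x = x := by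
  induction x using Quotient.inductionOn' with
  | h a => simp [rightDeck_mk, ← QuotientGroup.mk'_apply]

theorem rightDeck_inv_cancel (γ : Γ) (x : G ⧸ Γ') :
    rightDeck hle hnormal γ⁻¹ (rightDeck hle hnormal γ x) = x := by
  rw [rightDeck_comp, mul_inv_cancel, rightDeck_one]

theorem rightDeck_cancel_inv (γ : Γ) (x : G ⧸ Γ') :
    rightDeck hle hnormal γ (rightDeck hle hnormal γ⁻¹ x) = x := by
  rw [rightDeck_comp, inv_mul_cancel, rightDeck_one]

theorem smul_rightDeck (g : G) (γ : Γ) (x : G ⧸ Γ') :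
    g • rightDeck hle hnormal γ x = rightDeck hle hnormal γ (g • x) := by
  induction x using Quotient.inductionOn' with
  | h a =>
    show g • rightDeck hle hnormal γ (a : G ⧸ Γ') = rightDeck hle hnormal γ (g • (a : G ⧸ Γ'))
    rw [rightDeck_mk, smul_mk', smul_mk', rightDeck_mk, mul_assoc]

theorem cosetProj_rightDeck (γ : Γ) (x : G ⧸ Γ') :
    cosetProj hle (rightDeck hle hnormal γ x) = cosetProj hle x := by
  induction x using Quotient.inductionOn' with
  | h a =>
    show cosetProj hle (rightDeck hle hnormal γ (a : G ⧸ Γ')) = cosetProj hle (a : G ⧸ Γ')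
    rw [rightDeck_mk, cosetProj_mk, cosetProj_mk]
    exact (QuotientGroup.eq.mpr (by simpa [mul_assoc] using γ.2)).symm

theorem cosetProj_smul (g : G) (x : G ⧸ Γ') :
    cosetProj hle (g • x) = g • cosetProj hle x := by
  induction x using Quotient.inductionOn' with
  | h a =>
    show cosetProj hle (g • (a : G ⧸ Γ')) = g • cosetProj hle (a : G ⧸ Γ')
    rw [smul_mk', cosetProj_mk, cosetProj_mk, MulAction.Quotient.smul_mk, smul_eq_mul]

theorem rightDeck_congr {γ δ : Γ} (h : (γ : Γ ⧸ Γ'.subgroupOf Γ) = δ) :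
    rightDeck hle hnormal γ = rightDeck hle hnormal δ := by
  funext x
  induction x using Quotient.inductionOn' with
  | h a =>
    show rightDeck hle hnormal γ (a : G ⧸ Γ') = rightDeck hle hnormal δ (a : G ⧸ Γ')
    rw [rightDeck_mk, rightDeck_mk]
    refine QuotientGroup.eq.mpr ?_
    have h1 : (γ : Γ)⁻¹ * δ ∈ Γ'.subgroupOf Γ := QuotientGroup.eq.mp h
    simpa [Subgroup.mem_subgroupOf, mul_assoc] using h1

theorem fundTranslate_eq (F₀ : Set (G ⧸ Γ')) (δ : Γ) :
    fundTranslate hle hnormal F₀ ((δ : Γ ⧸ Γ'.subgroupOf Γ)) = rightDeck hle hnormal δ '' F₀ := by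
  apply Set.Subset.antisymm
  · refine Set.iUnion₂_subset fun γ h => ?_
    rw [rightDeck_congr hle hnormal h]
  · intro x hx
    exact Set.mem_iUnion₂.mpr ⟨δ, rfl, hx⟩

/-- Two points lie over the same `Γ`-coset iff they differ by a deck transformation. -/
theorem cosetProj_eq_iff (x y : G ⧸ Γ') :
    cosetProj hle x = cosetProj hle y ↔ ∃ γ : Γ, rightDeck hle hnormal γ x = y := by
  induction x using Quotient.inductionOn' with
  | h a =>
    induction y using Quotient.inductionOn' with
    | h b =>
      show cosetProj hle (a : G ⧸ Γ') = cosetProj hle (b : G ⧸ Γ') ↔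
        ∃ γ : Γ, rightDeck hle hnormal γ (a : G ⧸ Γ') = (b : G ⧸ Γ')
      rw [cosetProj_mk, cosetProj_mk]
      constructor
      · intro h
        have hab : a⁻¹ * b ∈ Γ := QuotientGroup.eq.mp h
        refine ⟨⟨a⁻¹ * b, hab⟩, ?_⟩
        rw [rightDeck_mk]
        congr 1
        group
      · rintro ⟨γ, hγ⟩
        rw [rightDeck_mk] at hγ
        have h1 : (a * γ)⁻¹ * b ∈ Γ' := QuotientGroup.eq.mp hγ
        refine QuotientGroup.eq.mpr ?_
        have : a⁻¹ * b = (γ : G) * ((a * γ)⁻¹ * b) := by group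
        rw [this]
        exact Γ.mul_mem γ.2 (hle h1)
end Basic

/-- The right action of the finite group F = Γ⧸Γ' on G⧸Γ' commutes
with the left G-action, and given a Borel fundamental set F₀ for this action and an
H-invariant Radon measure μ on G⧸Γ, the assignment
ν(B) = Σ_{ξ ∈ F} μ(π(B ∩ F₀·ξ)) defines a Radon measure on G⧸Γ' which is invariant
under the right F-action and the left H-action and pushes forward to [Γ:Γ']·μ. -/
theorem canonical_deck_invariant_lift {G : Type*} [Group G] [TopologicalSpace G]
    [IsTopologicalGroup G] [LocallyCompactSpace G] [SecondCountableTopology G] [T2Space G]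
    (Γ' Γ : Subgroup G) [DiscreteTopology Γ] (hle : Γ' ≤ Γ)
    (hnormal : (Γ'.subgroupOf Γ).Normal) (hindex : Γ'.relIndex Γ ≠ 0)
    (H : Subgroup G)
    [MeasurableSpace (G ⧸ Γ)] [BorelSpace (G ⧸ Γ)]
    [MeasurableSpace (G ⧸ Γ')] [BorelSpace (G ⧸ Γ')]
    (F₀ : Set (G ⧸ Γ')) (hF₀meas : MeasurableSet F₀)
    (hF₀fund : ∀ x : G ⧸ Γ', ∃! y : G ⧸ Γ',
      y ∈ F₀ ∧ ∃ γ : Γ, rightDeck hle hnormal γ x = y)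
    (μ : Measure (G ⧸ Γ)) (hRadon : IsRadon μ)
    (hinv : ∀ h ∈ H, Measure.map ((h : G) • · : G ⧸ Γ → G ⧸ Γ) μ = μ) :
    (∀ (g : G) (γ : Γ) (x : G ⧸ Γ'),
      g • rightDeck hle hnormal γ x = rightDeck hle hnormal γ (g • x)) ∧
    ∃ ν : Measure (G ⧸ Γ'),
      (∀ B : Set (G ⧸ Γ'), MeasurableSet B →
        ν B = ∑' ξ : Γ ⧸ Γ'.subgroupOf Γ,
          μ (cosetProj hle '' (B ∩ fundTranslate hle hnormal F₀ ξ))) ∧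
      IsRadon ν ∧
      (∀ γ : Γ, Measure.map (rightDeck hle hnormal γ) ν = ν) ∧
      (∀ h ∈ H, Measure.map ((h : G) • · : G ⧸ Γ' → G ⧸ Γ') ν = ν) ∧
      Measure.map (cosetProj hle) ν = (Γ'.relIndex Γ) • μ := by
  classical
  set S : (Γ ⧸ Γ'.subgroupOf Γ) → Set (G ⧸ Γ') := fundTranslate hle hnormal F₀ with hSdef
  -- topological instances
  haveI hdisc' : DiscreteTopology Γ' := by
    have hcont : Continuous (Subgroup.inclusion hle) :=
      Continuous.subtype_mk continuous_subtype_val _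
    have hcomp : (Subtype.val : Γ → G) ∘ (Subgroup.inclusion hle) = (Subtype.val : Γ' → G) :=
      rfl
    have hemb : Topology.IsEmbedding (Subgroup.inclusion hle) :=
      Topology.IsEmbedding.of_comp hcont continuous_subtype_val
        (hcomp ▸ Topology.IsEmbedding.subtypeVal)
    exact hemb.discreteTopology
  have hΓclosed : IsClosed (Γ : Set G) := Subgroup.isClosed_of_discrete
  have hΓ'closed : IsClosed (Γ' : Set G) := Subgroup.isClosed_of_discrete
  haveI : T2Space (G ⧸ Γ) := aux_t2 Γ hΓclosed
  haveI : T2Space (G ⧸ Γ') := aux_t2 Γ' hΓ'closed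
  haveI : PolishSpace (G ⧸ Γ') := aux_polish _
  haveI : PolishSpace (G ⧸ Γ) := aux_polish _
  haveI : Finite (Γ ⧸ Γ'.subgroupOf Γ) := Nat.finite_of_card_ne_zero hindex
  haveI : Fintype (Γ ⧸ Γ'.subgroupOf Γ) := Fintype.ofFinite _
  haveI : IsFiniteMeasureOnCompacts μ := ⟨fun _K hK => hRadon.1 _ hK⟩
  -- continuity
  have hπcont : Continuous (cosetProj hle) := by
    rw [(QuotientGroup.isQuotientMap_mk Γ').continuous_iff]
    exact QuotientGroup.continuous_mk
  have hRcont : ∀ γ : Γ, Continuous (rightDeck hle hnormal γ) := by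
    intro γ
    rw [(QuotientGroup.isQuotientMap_mk Γ').continuous_iff]
    show Continuous fun a : G => rightDeck hle hnormal γ (a : G ⧸ Γ')
    simp only [rightDeck_mk]
    exact QuotientGroup.continuous_mk.comp (continuous_mul_right (γ : G))
  -- basic facts about the translates
  have hS_eq : ∀ δ : Γ, S ((δ : Γ ⧸ Γ'.subgroupOf Γ)) = rightDeck hle hnormal δ '' F₀ :=
    fundTranslate_eq hle hnormal F₀
  have hS_pre : ∀ δ : Γ,
      rightDeck hle hnormal δ '' F₀ = rightDeck hle hnormal δ⁻¹ ⁻¹' F₀ := by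
    intro δ
    ext x
    constructor
    · rintro ⟨y, hy, rfl⟩
      rw [Set.mem_preimage, rightDeck_inv_cancel]
      exact hy
    · intro hx
      exact ⟨rightDeck hle hnormal δ⁻¹ x, hx, rightDeck_cancel_inv hle hnormal δ x⟩
  have hSmeas : ∀ ξ, MeasurableSet (S ξ) := by
    intro ξ
    obtain ⟨δ, rfl⟩ := QuotientGroup.mk_surjective ξ
    rw [hS_eq, hS_pre]
    exact hF₀meas.preimage (hRcont _).measurable
  have keyA : ∀ y ∈ F₀, ∀ γ : Γ, rightDeck hle hnormal γ y ∈ F₀ →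
      rightDeck hle hnormal γ y = y := by
    intro y hy γ hyγ
    obtain ⟨z, _, huniq⟩ := hF₀fund y
    have h1 := huniq y ⟨hy, 1, rightDeck_one hle hnormal y⟩
    have h2 := huniq (rightDeck hle hnormal γ y) ⟨hyγ, γ, rfl⟩
    rw [h2, h1]
  have hSinj : ∀ ξ, Set.InjOn (cosetProj hle) (S ξ) := by
    intro ξ
    obtain ⟨δ, rfl⟩ := QuotientGroup.mk_surjective ξ
    rw [hS_eq]
    rintro _ ⟨a, ha, rfl⟩ _ ⟨b, hb, rfl⟩ hab
    rw [cosetProj_rightDeck, cosetProj_rightDeck] at hab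
    obtain ⟨γ, hγ⟩ := (cosetProj_eq_iff hle hnormal a b).mp hab
    have h2 := keyA a ha γ (by rw [hγ]; exact hb)
    rw [hγ] at h2
    rw [h2]
  have hSsurj : ∀ (ξ) (u : G ⧸ Γ), ∃ x ∈ S ξ, cosetProj hle x = u := by
    intro ξ u
    obtain ⟨δ, rfl⟩ := QuotientGroup.mk_surjective ξ
    obtain ⟨a, rfl⟩ := QuotientGroup.mk_surjective u
    obtain ⟨y, ⟨hy, γ, hγ⟩, -⟩ := hF₀fund ((a : G ⧸ Γ'))
    refine ⟨rightDeck hle hnormal δ y, ?_, ?_⟩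
    · rw [hS_eq]
      exact Set.mem_image_of_mem _ hy
    · rw [cosetProj_rightDeck, ← hγ, cosetProj_rightDeck, cosetProj_mk]
  have hScover : (⋃ ξ, S ξ) = Set.univ := by
    rw [Set.eq_univ_iff_forall]
    intro x
    obtain ⟨y, ⟨hy, γ, hγ⟩, -⟩ := hF₀fund x
    refine Set.mem_iUnion.mpr ⟨((γ⁻¹ : Γ) : Γ ⧸ Γ'.subgroupOf Γ), ?_⟩
    rw [hS_eq]
    exact ⟨y, hy, by rw [← hγ, rightDeck_inv_cancel]⟩
  have hSdisj : Pairwise (Function.onFun Disjoint S) := by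
    intro ξ η hne
    rw [Function.onFun, Set.disjoint_left]
    intro x hxξ hxη
    apply hne
    obtain ⟨δ, rfl⟩ := QuotientGroup.mk_surjective ξ
    obtain ⟨ε, rfl⟩ := QuotientGroup.mk_surjective η
    rw [hS_eq] at hxξ hxη
    obtain ⟨a, ha, hax⟩ := hxξ
    obtain ⟨b, hb, hbx⟩ := hxη
    have h1 : rightDeck hle hnormal (δ * ε⁻¹) a = b := by
      rw [← rightDeck_comp, hax, ← hbx, rightDeck_inv_cancel]
    have h2 := keyA a ha (δ * ε⁻¹) (by rw [h1]; exact hb)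
    have hba : b = a := by rw [← h1, h2]
    rw [hba] at hbx
    have h3 : rightDeck hle hnormal δ a = rightDeck hle hnormal ε a := by rw [hax, hbx]
    obtain ⟨c, rfl⟩ := QuotientGroup.mk_surjective a
    rw [rightDeck_mk, rightDeck_mk] at h3
    have h4 : (c * δ)⁻¹ * (c * ε) ∈ Γ' := QuotientGroup.eq.mp h3
    refine QuotientGroup.eq.mpr ?_
    rw [Subgroup.mem_subgroupOf]
    have : ((δ⁻¹ * ε : Γ) : G) = (c * δ)⁻¹ * (c * ε) := by push_cast; group
    rw [this]
    exact h4
  -- measurability of projected pieces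
  have himg : ∀ (A : Set (G ⧸ Γ')), MeasurableSet A → ∀ ξ,
      MeasurableSet (cosetProj hle '' (A ∩ S ξ)) := by
    intro A hA ξ
    exact (hA.inter (hSmeas ξ)).image_of_continuousOn_injOn hπcont.continuousOn
      ((hSinj ξ).mono Set.inter_subset_right)
  -- the sections
  have hσex : ∀ (ξ) (u : G ⧸ Γ), ∃ x, x ∈ S ξ ∧ cosetProj hle x = u := by
    intro ξ u
    obtain ⟨x, h1, h2⟩ := hSsurj ξ u
    exact ⟨x, h1, h2⟩
  set σ : (Γ ⧸ Γ'.subgroupOf Γ) → G ⧸ Γ → G ⧸ Γ' := fun ξ u => (hσex ξ u).choose with hσdef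
  have hσS : ∀ ξ u, σ ξ u ∈ S ξ := fun ξ u => (hσex ξ u).choose_spec.1
  have hσπ : ∀ ξ u, cosetProj hle (σ ξ u) = u := fun ξ u => (hσex ξ u).choose_spec.2
  have hσpre : ∀ (ξ) (B : Set (G ⧸ Γ')), σ ξ ⁻¹' B = cosetProj hle '' (B ∩ S ξ) := by
    intro ξ B
    ext u
    constructor
    · intro hu
      exact ⟨σ ξ u, ⟨hu, hσS ξ u⟩, hσπ ξ u⟩
    · rintro ⟨x, ⟨hxB, hxS⟩, rfl⟩
      have hx : σ ξ (cosetProj hle x) = x := hSinj ξ (hσS _ _) hxS (hσπ _ _)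
      show σ ξ (cosetProj hle x) ∈ B
      rw [hx]
      exact hxB
  have hσmeas : ∀ ξ, Measurable (σ ξ) := by
    intro ξ s hs
    rw [hσpre]
    exact himg s hs ξ
  -- the measure
  set ν : Measure (G ⧸ Γ') := Measure.sum (fun ξ => Measure.map (σ ξ) μ) with hνdef
  have hν : ∀ B : Set (G ⧸ Γ'), MeasurableSet B →
      ν B = ∑' ξ : Γ ⧸ Γ'.subgroupOf Γ, μ (cosetProj hle '' (B ∩ S ξ)) := by
    intro B hB
    rw [hνdef, Measure.sum_apply _ hB]
    refine tsum_congr fun ξ => ?_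
    rw [Measure.map_apply (hσmeas ξ) hB, hσpre]
  -- image of whole translate
  have hSfull : ∀ ξ, cosetProj hle '' (S ξ) = Set.univ := by
    intro ξ
    rw [Set.eq_univ_iff_forall]
    intro u
    obtain ⟨x, h1, h2⟩ := hSsurj ξ u
    exact ⟨x, h1, h2⟩
  have hππR : ∀ (A : Set (G ⧸ Γ')) (γ : Γ),
      cosetProj hle '' (rightDeck hle hnormal γ '' A) = cosetProj hle '' A := by
    intro A γ
    rw [Set.image_image]
    simp only [cosetProj_rightDeck]
  refine ⟨smul_rightDeck hle hnormal, ν, hν, ?_, ?_, ?_, ?_⟩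
  · -- Radon
    haveI : IsFiniteMeasureOnCompacts ν := by
      constructor
      intro K hK
      rw [hν K hK.isClosed.measurableSet]
      have hbound : ∀ ξ : Γ ⧸ Γ'.subgroupOf Γ,
          μ (cosetProj hle '' (K ∩ S ξ)) ≤ μ (cosetProj hle '' K) :=
        fun ξ => measure_mono (Set.image_mono Set.inter_subset_left)
      refine lt_of_le_of_lt (ENNReal.tsum_le_tsum hbound) ?_
      rw [tsum_fintype]
      exact ENNReal.sum_lt_top.mpr fun _ _ => (hK.image hπcont).measure_lt_top
    haveI : SigmaFinite ν := inferInstance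
    haveI : ν.InnerRegular := inferInstance
    refine ⟨fun _K hK => hK.measure_lt_top, fun s hs => le_antisymm ?_ ?_⟩
    · rw [hs.measure_eq_iSup_isCompact ν]
      refine iSup_le fun K => iSup_le fun hKs => iSup_le fun hKc => ?_
      exact le_iSup_of_le K (le_iSup_of_le hKc (le_iSup (fun _ => ν K) hKs))
    · exact iSup_le fun K => iSup_le fun _ => iSup_le fun hKs => measure_mono hKs
  · -- deck invariance
    intro γ
    refine Measure.ext fun B hB => ?_
    rw [Measure.map_apply (hRcont γ).measurable hB,
      hν _ (hB.preimage (hRcont γ).measurable), hν B hB,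
      ← Equiv.tsum_eq (Equiv.mulRight ((γ : Γ ⧸ Γ'.subgroupOf Γ)))
        (fun ξ => μ (cosetProj hle '' (B ∩ S ξ)))]
    refine tsum_congr fun ξ => ?_
    congr 1
    obtain ⟨δ, rfl⟩ := QuotientGroup.mk_surjective ξ
    have hmul : ((δ : Γ ⧸ Γ'.subgroupOf Γ) * (γ : Γ ⧸ Γ'.subgroupOf Γ))
        = ((δ * γ : Γ) : Γ ⧸ Γ'.subgroupOf Γ) := rfl
    show cosetProj hle '' (rightDeck hle hnormal γ ⁻¹' B ∩ S (QuotientGroup.mk δ)) =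
      cosetProj hle '' (B ∩ S ((Equiv.mulRight ((γ : Γ ⧸ Γ'.subgroupOf Γ)))
        (QuotientGroup.mk δ)))
    have heqv : (Equiv.mulRight ((γ : Γ ⧸ Γ'.subgroupOf Γ))) (QuotientGroup.mk δ)
        = ((δ * γ : Γ) : Γ ⧸ Γ'.subgroupOf Γ) := rfl
    rw [heqv, hS_eq, hS_eq]
    have h1 : rightDeck hle hnormal (δ * γ) '' F₀
        = rightDeck hle hnormal γ '' (rightDeck hle hnormal δ '' F₀) := by
      rw [Set.image_image]
      exact Set.image_congr fun y _ => (rightDeck_comp hle hnormal γ δ y).symm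
    rw [h1, Set.inter_comm B _, ← Set.image_inter_preimage (rightDeck hle hnormal γ) _ B,
      hππR, Set.inter_comm]
  · -- H invariance
    intro h hH
    have hLcont : Continuous ((h : G) • · : G ⧸ Γ' → G ⧸ Γ') := continuous_const_smul _
    have hL'meas : Measurable ((h : G) • · : G ⧸ Γ → G ⧸ Γ) :=
      (continuous_const_smul _).measurable
    refine Measure.ext fun B hB => ?_
    rw [Measure.map_apply hLcont.measurable hB, hν _ (hB.preimage hLcont.measurable), hν B hB]
    set P : (Γ ⧸ Γ'.subgroupOf Γ) → Set (G ⧸ Γ') :=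
      fun ξ => ((h : G)⁻¹ • · : G ⧸ Γ' → G ⧸ Γ') ⁻¹' (S ξ) with hPdef
    have hPm : ∀ ξ, MeasurableSet (P ξ) :=
      fun ξ => (hSmeas ξ).preimage (continuous_const_smul _).measurable
    have hPc : (⋃ ξ, P ξ) = Set.univ := by
      rw [hPdef, ← Set.preimage_iUnion, hScover, Set.preimage_univ]
    have hPd : Pairwise (Function.onFun Disjoint P) :=
      fun i j hij => (hSdisj hij).preimage _
    have hPi : ∀ ξ, Set.InjOn (cosetProj hle) (P ξ) := by
      intro ξ x hx y hy hxy
      have h1 : cosetProj hle ((h : G)⁻¹ • x) = cosetProj hle ((h : G)⁻¹ • y) := by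
        rw [cosetProj_smul, cosetProj_smul, hxy]
      have h2 := hSinj ξ hx hy h1
      have := congrArg ((h : G) • ·) h2
      simpa [smul_smul] using this
    -- step 1 : rewrite each term
    have hstep : ∀ ξ, μ (cosetProj hle ''
        ((((h : G) • · : G ⧸ Γ' → G ⧸ Γ') ⁻¹' B) ∩ S ξ))
        = μ (cosetProj hle '' (B ∩ P ξ)) := by
      intro ξ
      have hset : (((h : G) • · : G ⧸ Γ' → G ⧸ Γ') ⁻¹' B) ∩ S ξ
          = ((h : G)⁻¹ • · : G ⧸ Γ' → G ⧸ Γ') '' (B ∩ P ξ) := by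
        ext x
        constructor
        · rintro ⟨hxB, hxS⟩
          refine ⟨(h : G) • x, ⟨hxB, ?_⟩, by simp [smul_smul]⟩
          rw [hPdef]
          show (h : G)⁻¹ • ((h : G) • x) ∈ S ξ
          simpa [smul_smul] using hxS
        · rintro ⟨y, ⟨hyB, hyP⟩, rfl⟩
          refine ⟨?_, hyP⟩
          show (h : G) • ((h : G)⁻¹ • y) ∈ B
          simpa [smul_smul] using hyB
      rw [hset]
      have himgeq : cosetProj hle '' (((h : G)⁻¹ • · : G ⧸ Γ' → G ⧸ Γ') '' (B ∩ P ξ))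
          = ((h : G)⁻¹ • · : G ⧸ Γ → G ⧸ Γ) '' (cosetProj hle '' (B ∩ P ξ)) := by
        rw [Set.image_image, Set.image_image]
        exact Set.image_congr fun y _ => cosetProj_smul hle ((h : G)⁻¹) y
      rw [himgeq]
      have hpre : ∀ X : Set (G ⧸ Γ), ((h : G)⁻¹ • · : G ⧸ Γ → G ⧸ Γ) '' X
          = ((h : G) • · : G ⧸ Γ → G ⧸ Γ) ⁻¹' X := by
        intro X
        ext u
        constructor
        · rintro ⟨v, hv, rfl⟩
          simpa [Set.mem_preimage, smul_smul] using hv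
        · intro hu
          exact ⟨(h : G) • u, hu, by simp [smul_smul]⟩
      rw [hpre]
      have hXm : MeasurableSet (cosetProj hle '' (B ∩ P ξ)) :=
        (hB.inter (hPm ξ)).image_of_continuousOn_injOn hπcont.continuousOn
          ((hPi ξ).mono Set.inter_subset_right)
      calc μ (((h : G) • · : G ⧸ Γ → G ⧸ Γ) ⁻¹' (cosetProj hle '' (B ∩ P ξ)))
          = (Measure.map ((h : G) • · : G ⧸ Γ → G ⧸ Γ) μ) (cosetProj hle '' (B ∩ P ξ)) :=
            (Measure.map_apply hL'meas hXm).symm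
        _ = μ (cosetProj hle '' (B ∩ P ξ)) := by rw [hinv h hH]
    rw [tsum_congr hstep]
    -- step 2 : exchange fundamental partitions
    have h1 : ∀ ξ, μ (cosetProj hle '' (B ∩ P ξ))
        = ∑' η, μ (cosetProj hle '' ((B ∩ P ξ) ∩ S η)) := by
      intro ξ
      exact aux_decomp μ (cosetProj hle) (B ∩ P ξ) ((hPi ξ).mono Set.inter_subset_right)
        S hScover hSdisj
        (fun η => ((hB.inter (hPm ξ)).inter (hSmeas η)).image_of_continuousOn_injOn
          hπcont.continuousOn ((hSinj η).mono Set.inter_subset_right))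
    have h2 : ∀ η, μ (cosetProj hle '' (B ∩ S η))
        = ∑' ξ, μ (cosetProj hle '' ((B ∩ S η) ∩ P ξ)) := by
      intro η
      exact aux_decomp μ (cosetProj hle) (B ∩ S η) ((hSinj η).mono Set.inter_subset_right)
        P hPc hPd
        (fun ξ => ((hB.inter (hSmeas η)).inter (hPm ξ)).image_of_continuousOn_injOn
          hπcont.continuousOn ((hPi ξ).mono Set.inter_subset_right))
    calc ∑' ξ, μ (cosetProj hle '' (B ∩ P ξ))
        = ∑' ξ, ∑' η, μ (cosetProj hle '' ((B ∩ P ξ) ∩ S η)) := tsum_congr h1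
      _ = ∑' η, ∑' ξ, μ (cosetProj hle '' ((B ∩ P ξ) ∩ S η)) := ENNReal.tsum_comm
      _ = ∑' η, ∑' ξ, μ (cosetProj hle '' ((B ∩ S η) ∩ P ξ)) := by
          refine tsum_congr fun η => tsum_congr fun ξ => ?_
          rw [Set.inter_right_comm]
      _ = ∑' η, μ (cosetProj hle '' (B ∩ S η)) := tsum_congr fun η => (h2 η).symm
  · -- push forward
    refine Measure.ext fun A hA => ?_
    rw [Measure.map_apply hπcont.measurable hA, hν _ (hA.preimage hπcont.measurable)]
    have hterm : ∀ ξ, cosetProj hle '' ((cosetProj hle ⁻¹' A) ∩ S ξ) = A := by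
      intro ξ
      rw [Set.inter_comm, Set.image_inter_preimage, hSfull, Set.univ_inter]
    rw [tsum_congr fun ξ => by rw [hterm ξ]]
    have hcard : Γ'.relIndex Γ = Fintype.card (Γ ⧸ Γ'.subgroupOf Γ) :=
      Nat.card_eq_fintype_card
    rw [tsum_fintype]
    simp [Finset.sum_const, hcard, Measure.smul_apply, nsmul_eq_mul]
end

section
/- Let Γ ≤ SL₂(ℂ) be a discrete subgroup and let μ be a Radon measure on SL₂(ℂ)⧸Γ that is U-invariant, U-ergodic, and quasi-invariant under every element of the diagonal subgroup D. Then there exists α ∈ ℝ such that for every λ ∈ ℂ with λ ≠ 0, Measure.map (d_λ • ·) μ = |λ|^{2α} • μ, where d_λ = [[λ, 0], [0, λ⁻¹]]. In particular μ is invariant under every d_λ with |λ| = 1. -/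
open MeasureTheory Matrix Filter Topology Pointwise
open scoped ENNReal NNReal symmDiff

noncomputable section

abbrev SL2C := Matrix.SpecialLinearGroup (Fin 2) ℂ

instance : TopologicalSpace SL2C :=
  TopologicalSpace.induced (fun g : SL2C => (g : Matrix (Fin 2) (Fin 2) ℂ)) inferInstance

instance : MeasurableSpace SL2C := borel _
instance : BorelSpace SL2C := ⟨rfl⟩

instance (Γ : Subgroup SL2C) : MeasurableSpace (SL2C ⧸ Γ) := borel _
instance (Γ : Subgroup SL2C) : BorelSpace (SL2C ⧸ Γ) := ⟨rfl⟩

/-- membership in the unipotent upper triangular subgroup U -/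
def IsUnip (g : SL2C) : Prop := g.1 1 0 = 0 ∧ g.1 0 0 = 1 ∧ g.1 1 1 = 1

/-- membership in the upper triangular (Borel) subgroup B -/
def IsUpper (g : SL2C) : Prop := g.1 1 0 = 0

/-- membership in the diagonal subgroup D -/
def IsDiag (g : SL2C) : Prop := g.1 1 0 = 0 ∧ g.1 0 1 = 0

/-- Zariski density of a subset of SL₂(ℂ) -/
def ZariskiDense (S : Set SL2C) : Prop :=
  ∀ p : MvPolynomial (Fin 2 × Fin 2) ℂ,
    (∀ g ∈ S, MvPolynomial.eval (fun ij => g.1 ij.1 ij.2) p = 0) →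
    ∀ g : SL2C, MvPolynomial.eval (fun ij => g.1 ij.1 ij.2) p = 0

/-- U-invariance of a measure on SL₂(ℂ)⧸Γ -/
def UInvariant {Γ : Subgroup SL2C} (μ : Measure (SL2C ⧸ Γ)) : Prop :=
  ∀ u : SL2C, IsUnip u → Measure.map (u • ·) μ = μ

/-- U-ergodicity of a measure on SL₂(ℂ)⧸Γ -/
def UErgodic {Γ : Subgroup SL2C} (μ : Measure (SL2C ⧸ Γ)) : Prop :=
  ∀ s : Set (SL2C ⧸ Γ), MeasurableSet s → (∀ u : SL2C, IsUnip u → u • s = s) →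
    μ s = 0 ∨ μ sᶜ = 0

/-- quasi-invariance of a measure under a group element -/
def QuasiInvariantUnder {Γ : Subgroup SL2C} (g : SL2C) (μ : Measure (SL2C ⧸ Γ)) : Prop :=
  (Measure.map (g • ·) μ).AbsolutelyContinuous μ ∧
    μ.AbsolutelyContinuous (Measure.map (g • ·) μ)

/-- μ is supported on a single U-orbit -/
def SupportedOnSingleUOrbit {Γ : Subgroup SL2C} (μ : Measure (SL2C ⧸ Γ)) : Prop :=
  ∃ x : SL2C ⧸ Γ, μ ({y | ∃ u : SL2C, IsUnip u ∧ y = u • x}ᶜ) = 0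

-- basic matrices
def uMat (z : ℂ) : SL2C := ⟨!![1, z; 0, 1], by simp [Matrix.det_fin_two_of]⟩

def dMat (a : ℂˣ) : SL2C := ⟨!![(a:ℂ), 0; 0, ((a⁻¹ : ℂˣ) : ℂ)], by
  simp [Matrix.det_fin_two_of]⟩

lemma uMat_mul (z w : ℂ) : uMat z * uMat w = uMat (z + w) := by
  ext i j
  rw [Matrix.SpecialLinearGroup.coe_mul]
  simp only [uMat]
  fin_cases i <;> fin_cases j <;>
    simp [Matrix.mul_apply, Fin.sum_univ_two, add_comm]

lemma dMat_mul (a b : ℂˣ) : dMat a * dMat b = dMat (a * b) := by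
  ext i j
  rw [Matrix.SpecialLinearGroup.coe_mul]
  simp only [dMat]
  fin_cases i <;> fin_cases j <;>
    simp [Matrix.mul_apply, Fin.sum_univ_two, mul_comm]

lemma isUnip_uMat (z : ℂ) : IsUnip (uMat z) := by
  refine ⟨?_, ?_, ?_⟩ <;> simp [uMat]

lemma isUnip_iff {g : SL2C} : IsUnip g ↔ ∃ z, g = uMat z := by
  constructor
  · rintro ⟨h10, h00, h11⟩
    refine ⟨g.1 0 1, ?_⟩
    ext i j
    fin_cases i <;> fin_cases j <;> simp [uMat, h10, h00, h11]
  · rintro ⟨z, rfl⟩; exact isUnip_uMat z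

lemma isDiag_dMat (a : ℂˣ) : IsDiag (dMat a) := by
  constructor <;> simp [dMat]

lemma isDiag_iff {g : SL2C} : IsDiag g ↔ ∃ a : ℂˣ, g = dMat a := by
  constructor
  · rintro ⟨h10, h01⟩
    have hdet : g.1 0 0 * g.1 1 1 = 1 := by
      have := g.2
      rw [Matrix.det_fin_two, h10, h01] at this
      simpa using this
    have h00 : g.1 0 0 ≠ 0 := by
      intro h; rw [h, zero_mul] at hdet; exact zero_ne_one hdet
    refine ⟨Units.mk0 (g.1 0 0) h00, ?_⟩
    ext i j
    have h11 : g.1 1 1 = (g.1 0 0)⁻¹ := by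
      field_simp; linear_combination hdet
    fin_cases i <;> fin_cases j <;>
      simp [dMat, h10, h01, h11, Units.mk0]
  · rintro ⟨a, rfl⟩; exact isDiag_dMat a

-- topology infrastructure
instance : SecondCountableTopology (Matrix (Fin 2) (Fin 2) ℂ) :=
  inferInstanceAs (SecondCountableTopology (Fin 2 → Fin 2 → ℂ))
instance : LocallyCompactSpace (Matrix (Fin 2) (Fin 2) ℂ) :=
  inferInstanceAs (LocallyCompactSpace (Fin 2 → Fin 2 → ℂ))
lemma sl2c_embedding :
    Topology.IsEmbedding (fun g : SL2C => (g : Matrix (Fin 2) (Fin 2) ℂ)) :=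
  ⟨⟨rfl⟩, Subtype.coe_injective⟩

instance : IsTopologicalGroup SL2C where
  continuous_mul := by
    apply continuous_induced_rng.2
    have : Continuous fun p : SL2C × SL2C =>
        ((p.1 : Matrix (Fin 2) (Fin 2) ℂ) * (p.2 : Matrix (Fin 2) (Fin 2) ℂ)) :=
      (continuous_induced_dom.comp continuous_fst).matrix_mul
        (continuous_induced_dom.comp continuous_snd)
    exact this
  continuous_inv := by
    apply continuous_induced_rng.2
    have : Continuous fun g : SL2C => (g : Matrix (Fin 2) (Fin 2) ℂ).adjugate :=
      continuous_induced_dom.matrix_adjugate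
    exact this

instance : T2Space SL2C := sl2c_embedding.t2Space
instance : SecondCountableTopology SL2C := sl2c_embedding.secondCountableTopology

lemma sl2c_closedEmbedding :
    Topology.IsClosedEmbedding (fun g : SL2C => (g : Matrix (Fin 2) (Fin 2) ℂ)) := by
  refine ⟨sl2c_embedding, ?_⟩
  have : (Set.range fun g : SL2C => (g : Matrix (Fin 2) (Fin 2) ℂ)) =
      (fun A : Matrix (Fin 2) (Fin 2) ℂ => A.det) ⁻¹' {1} := by
    ext A
    constructor
    · rintro ⟨g, rfl⟩; exact g.2
    · intro hA; exact ⟨⟨A, hA⟩, rfl⟩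
  rw [this]
  exact IsClosed.preimage (Continuous.matrix_det continuous_id) isClosed_singleton

instance : LocallyCompactSpace SL2C := sl2c_closedEmbedding.locallyCompactSpace
instance : SigmaCompactSpace SL2C := inferInstance

section QuotTop
variable (Γ : Subgroup SL2C) [DiscreteTopology Γ]

lemma gamma_closed : IsClosed (Γ : Set SL2C) := by
  obtain ⟨U, hUopen, hU⟩ : ∃ U : Set SL2C, IsOpen U ∧
      Subtype.val ⁻¹' U = ({⟨1, Γ.one_mem⟩} : Set Γ) := by
    have : IsOpen ({⟨1, Γ.one_mem⟩} : Set Γ) := isOpen_discrete _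
    rwa [isOpen_induced_iff] at this
  have hUone : (1 : SL2C) ∈ U := by
    have : (⟨1, Γ.one_mem⟩ : Γ) ∈ Subtype.val ⁻¹' U := by rw [hU]; rfl
    exact this
  have hUinter : ∀ g : SL2C, g ∈ U → g ∈ Γ → g = 1 := by
    intro g hgU hgΓ
    have : (⟨g, hgΓ⟩ : Γ) ∈ Subtype.val ⁻¹' U := hgU
    rw [hU] at this
    simpa [Subtype.ext_iff] using this
  obtain ⟨W, hW, hWU⟩ := exists_nhds_split_inv (hUopen.mem_nhds hUone)
  rw [← closure_subset_iff_isClosed]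
  intro x hx
  have hN : (fun g => g * x⁻¹) ⁻¹' W ∈ 𝓝 x := by
    apply ContinuousAt.preimage_mem_nhds (continuous_mul_right x⁻¹).continuousAt
    simpa using hW
  obtain ⟨γ₁, hγ₁N, hγ₁Γ⟩ := mem_closure_iff_nhds.1 hx _ hN
  have key : ∀ γ : SL2C, γ ∈ (fun g => g * x⁻¹) ⁻¹' W → γ ∈ (Γ : Set SL2C) → γ = γ₁ := by
    intro γ hγW hγΓ
    have h1 : γ * x⁻¹ / (γ₁ * x⁻¹) ∈ U := hWU _ hγW _ hγ₁N
    have h2 : γ * x⁻¹ / (γ₁ * x⁻¹) = γ * γ₁⁻¹ := by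
      simp [div_eq_mul_inv, _root_.mul_inv_rev, mul_assoc]
    rw [h2] at h1
    have h3 : γ * γ₁⁻¹ ∈ Γ := Γ.mul_mem hγΓ (Γ.inv_mem hγ₁Γ)
    exact mul_inv_eq_one.1 (hUinter _ h1 h3)
  have : x ∈ closure ({γ₁} : Set SL2C) := by
    rw [mem_closure_iff_nhds]
    intro t ht
    obtain ⟨γ, hγ, hγΓ⟩ := mem_closure_iff_nhds.1 hx _ (Filter.inter_mem ht hN)
    exact ⟨γ, hγ.1, key γ hγ.2 hγΓ⟩
  rw [closure_singleton] at this
  rw [Set.mem_singleton_iff.1 this]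
  exact hγ₁Γ

instance : T2Space (SL2C ⧸ Γ) := by
  rw [t2_iff_isClosed_diagonal]
  have hR : IsClosed {p : SL2C × SL2C | p.1⁻¹ * p.2 ∈ Γ} := by
    have : {p : SL2C × SL2C | p.1⁻¹ * p.2 ∈ Γ} =
        (fun p : SL2C × SL2C => p.1⁻¹ * p.2) ⁻¹' (Γ : Set SL2C) := rfl
    rw [this]
    exact (gamma_closed Γ).preimage ((continuous_fst.inv).mul continuous_snd)
  have hopen : IsOpen ((fun p : SL2C × SL2C =>
      ((QuotientGroup.mk p.1 : SL2C ⧸ Γ), (QuotientGroup.mk p.2 : SL2C ⧸ Γ))) ''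
      {p : SL2C × SL2C | p.1⁻¹ * p.2 ∈ Γ}ᶜ) := by
    have := (QuotientGroup.isOpenMap_coe (N := Γ)).prodMap
      (QuotientGroup.isOpenMap_coe (N := Γ))
    exact this _ hR.isOpen_compl
  have heq : (Set.diagonal (SL2C ⧸ Γ))ᶜ = (fun p : SL2C × SL2C =>
      ((QuotientGroup.mk p.1 : SL2C ⧸ Γ), (QuotientGroup.mk p.2 : SL2C ⧸ Γ))) ''
      {p : SL2C × SL2C | p.1⁻¹ * p.2 ∈ Γ}ᶜ := by
    ext ⟨x, y⟩
    simp only [Set.mem_compl_iff, Set.mem_diagonal_iff, Set.mem_image, Set.mem_setOf_eq,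
      Prod.mk.injEq, Prod.exists]
    constructor
    · intro hxy
      obtain ⟨a, rfl⟩ := QuotientGroup.mk_surjective x
      obtain ⟨b, rfl⟩ := QuotientGroup.mk_surjective y
      exact ⟨a, b, fun h => hxy (QuotientGroup.eq.2 h), rfl, rfl⟩
    · rintro ⟨a, b, hab, rfl, rfl⟩ h
      exact hab (QuotientGroup.eq.1 h)
  rw [← isOpen_compl_iff, heq]
  exact hopen

instance : SigmaCompactSpace (SL2C ⧸ Γ) := by
  refine ⟨⟨fun n => QuotientGroup.mk '' compactCovering SL2C n, fun n =>
    (isCompact_compactCovering SL2C n).image continuous_quot_mk, ?_⟩⟩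
  rw [← Set.image_iUnion, iUnion_compactCovering, Set.image_univ]
  exact Set.range_eq_univ.2 QuotientGroup.mk_surjective

end QuotTop

-- more matrix lemmas
lemma uMat_zero : uMat 0 = 1 := by
  ext i j; fin_cases i <;> fin_cases j <;> simp [uMat]

lemma uMat_inv (z : ℂ) : (uMat z)⁻¹ = uMat (-z) := by
  rw [inv_eq_iff_mul_eq_one, uMat_mul, add_neg_cancel, uMat_zero]

lemma uMat_dMat (z : ℂ) (a : ℂˣ) :
    uMat z * dMat a = dMat a * uMat (((a⁻¹ : ℂˣ) : ℂ) ^ 2 * z) := by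
  ext i j
  simp only [Matrix.SpecialLinearGroup.coe_mul]
  fin_cases i <;> fin_cases j <;>
    · simp [uMat, dMat, Matrix.mul_apply, Fin.sum_univ_two]
      try field_simp
      try ring

lemma continuous_uMat : Continuous uMat := by
  apply continuous_induced_rng.2
  refine continuous_matrix fun i j => ?_
  fin_cases i <;> fin_cases j <;> simp [uMat] <;>
    first
    | exact continuous_const
    | exact continuous_id

section MeasInfra
variable {Γ : Subgroup SL2C} [DiscreteTopology Γ]

local notation "X" => SL2C ⧸ Γ

lemma continuous_smul_quot (g : SL2C) : Continuous ((g • ·) : X → X) :=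
  continuous_const_smul g

lemma measurable_smul_quot (g : SL2C) : Measurable ((g • ·) : X → X) :=
  (continuous_smul_quot g).measurable

def smulEquiv (g : SL2C) : (SL2C ⧸ Γ) ≃ᵐ (SL2C ⧸ Γ) where
  toEquiv := MulAction.toPerm g
  measurable_toFun := measurable_smul_quot g
  measurable_invFun := measurable_smul_quot g⁻¹

lemma smulEquiv_apply (g : SL2C) (x : X) : smulEquiv (Γ := Γ) g x = g • x := rfl

lemma map_smul_map (g h : SL2C) (μ : Measure X) :
    Measure.map (g • ·) (Measure.map (h • ·) μ) = Measure.map ((g * h) • ·) μ := by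
  rw [Measure.map_map (measurable_smul_quot g) (measurable_smul_quot h)]
  congr 1
  funext x
  simp [Function.comp, mul_smul]

lemma radon_sigmaFinite (μ : Measure X) (h : IsRadon μ) : SigmaFinite μ := by
  refine ⟨⟨⟨fun n => CompactExhaustion.choice (SL2C ⧸ Γ) n, fun _ => trivial,
    fun n => h.1 _ ((CompactExhaustion.choice (SL2C ⧸ Γ)).isCompact n), ?_⟩⟩⟩
  exact (CompactExhaustion.choice (SL2C ⧸ Γ)).iUnion_eq

lemma map_radon (μ : Measure X) (h : IsRadon μ) (g : SL2C) (K : Set X) (hK : IsCompact K) :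
    Measure.map (g • ·) μ K < ⊤ := by
  rw [Measure.map_apply (measurable_smul_quot g) hK.isClosed.measurableSet]
  have : (g • ·) ⁻¹' K = g⁻¹ • K := by
    ext x; simp [Set.mem_smul_set_iff_inv_smul_mem]
  rw [this]
  have : IsCompact (g⁻¹ • K) := by
    rw [← Set.image_smul]
    exact hK.image (continuous_smul_quot g⁻¹)
  exact h.1 _ this

lemma map_sigmaFinite (μ : Measure X) (h : IsRadon μ) (g : SL2C) :
    SigmaFinite (Measure.map (g • ·) μ) := by
  refine ⟨⟨⟨fun n => CompactExhaustion.choice (SL2C ⧸ Γ) n, fun _ => trivial,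
    fun n => map_radon μ h g _ ((CompactExhaustion.choice (SL2C ⧸ Γ)).isCompact n), ?_⟩⟩⟩
  exact (CompactExhaustion.choice (SL2C ⧸ Γ)).iUnion_eq

end MeasInfra

section Propor
variable {Γ : Subgroup SL2C} [DiscreteTopology Γ]

theorem propor (μ : Measure (SL2C ⧸ Γ)) (hRadon : IsRadon μ)
    (hInv : UInvariant μ) (hErg : UErgodic μ) (hμ0 : μ ≠ 0)
    (a : ℂˣ) (hQI : QuasiInvariantUnder (dMat a) μ) :
    ∃ c : ℝ≥0∞, c ≠ 0 ∧ c ≠ ⊤ ∧ Measure.map ((dMat a) • ·) μ = c • μ := by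
  haveI : SigmaFinite μ := radon_sigmaFinite μ hRadon
  set ν := Measure.map ((dMat a) • ·) μ with hνdef
  haveI : SigmaFinite ν := map_sigmaFinite μ hRadon _
  have hμInv : ∀ z : ℂ, Measure.map ((uMat z) • ·) μ = μ := fun z =>
    hInv _ (isUnip_uMat z)
  have hνInv : ∀ z : ℂ, Measure.map ((uMat z) • ·) ν = ν := by
    intro z
    rw [hνdef, map_smul_map, uMat_dMat z a, ← map_smul_map, hμInv]
  set f := ν.rnDeriv μ with hfdef
  have hf : Measurable f := Measure.measurable_rnDeriv _ _
  have hwd : μ.withDensity f = ν := Measure.withDensity_rnDeriv_eq ν μ hQI.1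
  -- invariance of f
  have hfe : ∀ z : ℂ, (fun x => f (uMat z • x)) =ᵐ[μ] f := by
    intro z
    set e := smulEquiv (Γ := Γ) (uMat z) with hedef
    have hecoe : ⇑e = ((uMat z) • ·) := rfl
    have h1 : Measure.map e (μ.withDensity (fun x => f (e x))) =
        (Measure.map e μ).withDensity f := by
      ext s hs
      rw [Measure.map_apply e.measurable hs, withDensity_apply _ (e.measurable hs),
        withDensity_apply _ hs, ← setLIntegral_map hs hf e.measurable]
    have h2 : μ.withDensity (fun x => f (e x)) = μ.withDensity f := by
      have h1' : Measure.map e (μ.withDensity (fun x => f (e x))) = Measure.map e ν := by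
        rw [h1, show Measure.map (⇑e) μ = μ from hμInv z, hwd,
          show Measure.map (⇑e) ν = ν from hνInv z]
      have h3 := congrArg (Measure.map e.symm) h1'
      rwa [e.map_symm_map, e.map_symm_map, ← hwd] at h3
    exact (withDensity_eq_iff_of_sigmaFinite
      ((hf.comp e.measurable).aemeasurable) hf.aemeasurable).1 h2
  -- level sets
  set S : ℝ≥0∞ → Set (SL2C ⧸ Γ) := fun t => {x | f x < t} with hSdef
  have hSmeas : ∀ t, MeasurableSet (S t) := fun t => measurableSet_lt hf measurable_const
  have hact : Measurable (fun q : ℂ × (SL2C ⧸ Γ) => uMat q.1 • q.2) :=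
    ((continuous_uMat.comp continuous_fst).smul continuous_snd).measurable
  have hvol_univ : (volume : Measure ℂ) Set.univ ≠ 0 :=
    (isOpen_univ.measure_ne_zero volume ⟨0, trivial⟩)
  -- dichotomy
  have hdich : ∀ t, μ (S t) = 0 ∨ μ (S t)ᶜ = 0 := by
    intro t
    set A : Set (ℂ × (SL2C ⧸ Γ)) := (fun q : ℂ × (SL2C ⧸ Γ) => uMat q.1 • q.2) ⁻¹' (S t)
      with hAdef
    set B : Set (ℂ × (SL2C ⧸ Γ)) := Prod.snd ⁻¹' (S t) with hBdef
    have hA : MeasurableSet A := hact (hSmeas t)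
    have hB : MeasurableSet B := measurable_snd (hSmeas t)
    set N : Set (ℂ × (SL2C ⧸ Γ)) := (A \ B) ∪ (B \ A) with hNdef
    have hN : MeasurableSet N := (hA.diff hB).union (hB.diff hA)
    have hsec : ∀ z : ℂ, μ (Prod.mk z ⁻¹' N) = 0 := by
      intro z
      have hbad : μ {x | ¬ f (uMat z • x) = f x} = 0 := by
        have h := hfe z
        rw [Filter.EventuallyEq, ae_iff] at h
        exact h
      apply measure_mono_null _ hbad
      rintro x (⟨h1, h2⟩ | ⟨h1, h2⟩) <;>
      · simp only [hAdef, hBdef, Set.mem_preimage, Set.mem_setOf_eq, hSdef] at h1 h2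
        intro heq
        simp only [Set.mem_setOf_eq, heq] at *
        first
          | exact h2 h1
          | exact h2 (heq ▸ h1)
    have hprod : ((volume : Measure ℂ).prod μ) N = 0 := by
      rw [Measure.prod_apply hN]
      simp [hsec]
    have haesec : ∀ᵐ x ∂μ, (volume : Measure ℂ) ((fun z => (z, x)) ⁻¹' N) = 0 := by
      have h0 : ∫⁻ x, (volume : Measure ℂ) ((fun z => (z, x)) ⁻¹' N) ∂μ = 0 := by
        rw [← Measure.prod_apply_symm hN, hprod]
      have h1 := (lintegral_eq_zero_iff (measurable_measure_prodMk_right hN)).1 h0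
      filter_upwards [h1] with x hx using hx
    set T : Set (SL2C ⧸ Γ) :=
      {x | (volume : Measure ℂ) ((fun z => (z, x)) ⁻¹' Aᶜ) = 0} with hTdef
    have hTmeas : MeasurableSet T := by
      have : Measurable (fun x => (volume : Measure ℂ) ((fun z => (z, x)) ⁻¹' Aᶜ)) :=
        measurable_measure_prodMk_right hA.compl
      exact this (MeasurableSet.singleton 0)
    have hTiff : ∀ (w : ℂ) (x : SL2C ⧸ Γ), (uMat w • x ∈ T ↔ x ∈ T) := by
      intro w x
      have hseteq : ((fun z => (z, uMat w • x)) ⁻¹' Aᶜ) =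
          (fun z => z + w) ⁻¹' ((fun z => (z, x)) ⁻¹' Aᶜ) := by
        ext z
        simp only [Set.mem_preimage, Set.mem_compl_iff, hAdef, Set.mem_preimage]
        rw [← mul_smul, uMat_mul]
      simp only [hTdef, Set.mem_setOf_eq, hseteq, measure_preimage_add_right]
    have hTinv : ∀ u : SL2C, IsUnip u → u • T = T := by
      intro u hu
      obtain ⟨w, rfl⟩ := isUnip_iff.1 hu
      ext y
      rw [Set.mem_smul_set_iff_inv_smul_mem, uMat_inv]
      exact hTiff (-w) y
    have hTS : T =ᵐ[μ] S t := by
      rw [Filter.eventuallyEq_set]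
      filter_upwards [haesec] with x hx
      by_cases hxS : x ∈ S t
      · refine ⟨fun _ => hxS, fun _ => ?_⟩
        show (volume : Measure ℂ) _ = 0
        apply measure_mono_null _ hx
        intro z hz
        simp only [Set.mem_preimage, Set.mem_compl_iff] at hz
        right
        refine ⟨hxS, hz⟩
      · constructor
        · intro hxT
          exfalso
          have h1 : (volume : Measure ℂ) ((fun z => (z, x)) ⁻¹' A) = 0 := by
            apply measure_mono_null _ hx
            intro z hz
            simp only [Set.mem_preimage] at hz
            left
            exact ⟨hz, hxS⟩
          have h2 : (volume : Measure ℂ) ((fun z => (z, x)) ⁻¹' Aᶜ) = 0 := hxT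
          apply hvol_univ
          have : (Set.univ : Set ℂ) ⊆
              ((fun z => (z, x)) ⁻¹' A) ∪ ((fun z => (z, x)) ⁻¹' Aᶜ) := by
            intro z _
            by_cases hz : (z, x) ∈ A
            · exact Or.inl hz
            · exact Or.inr hz
          refine le_antisymm ?_ zero_le
          calc (volume : Measure ℂ) Set.univ ≤ _ := measure_mono this
          _ ≤ (volume : Measure ℂ) ((fun z => (z, x)) ⁻¹' A) +
              (volume : Measure ℂ) ((fun z => (z, x)) ⁻¹' Aᶜ) := measure_union_le _ _
          _ = 0 := by rw [h1, h2, add_zero]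
        · intro h
          exact (hxS h).elim
    have hμT : μ T = μ (S t) := measure_congr hTS
    have hμTc : μ Tᶜ = μ (S t)ᶜ := by
      apply measure_congr
      rw [Filter.eventuallyEq_set] at hTS ⊢
      filter_upwards [hTS] with x hx
      simp [hx]
    rcases hErg T hTmeas hTinv with h | h
    · left; rw [← hμT]; exact h
    · right; rw [← hμTc]; exact h
  -- the essential value
  set Z : Set ℝ≥0∞ := {t | μ (S t) = 0} with hZdef
  set c := sSup Z with hcdef
  have hdown : ∀ {s t : ℝ≥0∞}, s ≤ t → t ∈ Z → s ∈ Z := by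
    intro s t hst ht
    exact measure_mono_null (fun x hx => lt_of_lt_of_le hx hst) ht
  have h1 : μ {x | f x < c} = 0 := by
    set E : ℚ → Set (SL2C ⧸ Γ) := fun q =>
      if ((Real.toNNReal q : ℝ≥0∞) ∈ Z) then S (Real.toNNReal q) else ∅ with hEdef
    have hEnull : ∀ q, μ (E q) = 0 := by
      intro q
      simp only [hEdef]
      by_cases hq : ((Real.toNNReal q : ℝ≥0∞) ∈ Z)
      · rw [if_pos hq]; exact hq
      · rw [if_neg hq]; exact measure_empty
    apply measure_mono_null _ (measure_iUnion_null hEnull)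
    intro x hx
    simp only [Set.mem_setOf_eq] at hx
    obtain ⟨t, htZ, hxt⟩ := lt_sSup_iff.1 hx
    obtain ⟨q, _, hq1, hq2⟩ := ENNReal.lt_iff_exists_rat_btwn.1 hxt
    have hqZ : ((Real.toNNReal q : ℝ≥0∞) ∈ Z) := hdown hq2.le htZ
    exact Set.mem_iUnion.2 ⟨q, by simp [hEdef, hqZ]; exact hq1⟩
  have h2 : μ {x | c < f x} = 0 := by
    set F : ℚ → Set (SL2C ⧸ Γ) := fun q =>
      if (c < (Real.toNNReal q : ℝ≥0∞)) then (S (Real.toNNReal q))ᶜ else ∅ with hFdef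
    have hFnull : ∀ q, μ (F q) = 0 := by
      intro q
      simp only [hFdef]
      by_cases hq : c < (Real.toNNReal q : ℝ≥0∞)
      · simp only [hq, if_true]
        rcases hdich (Real.toNNReal q) with h | h
        · exact absurd (le_sSup (show ((Real.toNNReal q : ℝ≥0∞)) ∈ Z from h)) (not_le.2 hq)
        · exact h
      · simp [hq]
    apply measure_mono_null _ (measure_iUnion_null hFnull)
    intro x hx
    simp only [Set.mem_setOf_eq] at hx
    obtain ⟨q, _, hq1, hq2⟩ := ENNReal.lt_iff_exists_rat_btwn.1 hx
    refine Set.mem_iUnion.2 ⟨q, ?_⟩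
    simp only [hFdef, hq1, if_true]
    exact fun h => absurd h (not_lt.2 hq2.le)
  have hconst : f =ᵐ[μ] fun _ => c := by
    rw [Filter.EventuallyEq, ae_iff]
    apply measure_mono_null _ (measure_union_null h1 h2)
    intro x hx
    simp only [Set.mem_setOf_eq] at hx ⊢
    rcases lt_or_gt_of_ne hx with h | h
    · exact Or.inl h
    · exact Or.inr h
  have hνc : ν = c • μ := by
    rw [← hwd, withDensity_congr_ae hconst, withDensity_const]
  have hc0 : c ≠ 0 := by
    intro hc
    rw [hc, zero_smul] at hνc
    have : μ = 0 := by
      have h := hQI.2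
      rw [← hνdef, hνc] at h
      ext s hs
      simpa using h (by simp : (0 : Measure (SL2C ⧸ Γ)) s = 0)
    exact hμ0 this
  have hctop : c ≠ ⊤ := by
    intro hc
    obtain ⟨K, hK, hKpos⟩ : ∃ K : Set (SL2C ⧸ Γ), IsCompact K ∧ 0 < μ K := by
      by_contra h
      push_neg at h
      have : μ Set.univ = 0 := by
        rw [hRadon.2 Set.univ MeasurableSet.univ]
        simp only [ENNReal.iSup_eq_zero]
        intro K
        by_cases hK : IsCompact K
        · simp only [hK, iSup_pos]
          intro _
          simpa using (h K hK)
        · simp [hK]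
      exact hμ0 (Measure.measure_univ_eq_zero.1 this)
    have hfin : ν K < ⊤ := map_radon μ hRadon _ K hK
    rw [hνc, hc] at hfin
    rw [Measure.smul_apply, smul_eq_mul, ENNReal.top_mul hKpos.ne'] at hfin
    exact (lt_irrefl _ hfin).elim
  exact ⟨c, hc0, hctop, hνc⟩

end Propor

-- Cauchy functional equation with boundedness
lemma additive_bounded_linear (h : ℝ → ℝ) (hadd : ∀ s t, h (s + t) = h s + h t)
    (B : ℝ) (hB : ∀ s ∈ Set.Icc (0:ℝ) 1, |h s| ≤ B) : ∀ s, h s = s * h 1 := by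
  set g : ℝ →+ ℝ := AddMonoidHom.mk' (fun s => h s - s * h 1)
    (by intro x y; rw [hadd]; ring) with hgdef
  have hgapp : ∀ x, g x = h x - x * h 1 := fun x => rfl
  have hg1 : g 1 = 0 := by rw [hgapp]; ring
  have hgint : ∀ n : ℤ, g (n : ℝ) = 0 := by
    intro n
    have hn : ((n : ℝ)) = n • (1 : ℝ) := by simp
    rw [hn, map_zsmul, hg1, smul_zero]
  have hgb : ∀ x : ℝ, |g x| ≤ B + |h 1| := by
    intro x
    have hx : g x = g (Int.fract x) := by
      have hsplit : x = (⌊x⌋ : ℝ) + Int.fract x := (Int.floor_add_fract x).symm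
      calc g x = g ((⌊x⌋ : ℝ) + Int.fract x) := by rw [← hsplit]
      _ = g ((⌊x⌋ : ℝ)) + g (Int.fract x) := map_add _ _ _
      _ = g (Int.fract x) := by rw [hgint, zero_add]
    rw [hx, hgapp]
    have hf0 : (0:ℝ) ≤ Int.fract x := Int.fract_nonneg x
    have hf1 : Int.fract x ≤ 1 := (Int.fract_lt_one x).le
    calc |h (Int.fract x) - Int.fract x * h 1|
        ≤ |h (Int.fract x)| + |Int.fract x * h 1| := abs_sub _ _
    _ ≤ B + |Int.fract x * h 1| := by
        gcongr
        exact hB _ ⟨hf0, hf1⟩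
    _ ≤ B + |h 1| := by
        have habs : |Int.fract x * h 1| ≤ |h 1| := by
          rw [abs_mul]
          have h1 : |Int.fract x| ≤ 1 := by rw [abs_of_nonneg hf0]; exact hf1
          calc |Int.fract x| * |h 1| ≤ 1 * |h 1| := by gcongr
          _ = |h 1| := one_mul _
        linarith
  intro s
  have hg0 : g s = 0 := by
    by_contra hgs
    have hpos : 0 < |g s| := abs_pos.2 hgs
    obtain ⟨n, hn⟩ := exists_nat_gt ((B + |h 1|) / |g s|)
    have h1 : (B + |h 1|) < n * |g s| := by
      rwa [div_lt_iff₀ hpos] at hn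
    have h2 : (n : ℝ) * |g s| = |g ((n : ℕ) • s)| := by
      rw [map_nsmul, nsmul_eq_mul, abs_mul, abs_of_nonneg (by positivity : (0:ℝ) ≤ (n:ℝ))]
    rw [h2] at h1
    exact absurd (hgb _) (not_le.2 h1)
  have := hgapp s
  rw [hg0] at this
  linarith [this.symm]

def unitExp (s : ℝ) : ℂˣ :=
  Units.mk0 ((Real.exp s : ℝ) : ℂ) (by exact_mod_cast (Real.exp_pos s).ne')

lemma unitExp_val (s : ℝ) : (unitExp s : ℂ) = ((Real.exp s : ℝ) : ℂ) := rfl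

lemma unitExp_add (s t : ℝ) : unitExp (s + t) = unitExp s * unitExp t := by
  apply Units.ext
  rw [Units.val_mul, unitExp_val, unitExp_val, unitExp_val, Real.exp_add, Complex.ofReal_mul]

lemma unitExp_zero : unitExp 0 = 1 := by
  apply Units.ext
  rw [unitExp_val, Real.exp_zero]
  simp

lemma abs_unitExp (s : ℝ) : ‖(unitExp s : ℂ)‖ = Real.exp s := by
  rw [unitExp_val, Complex.norm_real, Real.norm_eq_abs, abs_of_pos (Real.exp_pos s)]

section Annulus
variable {Γ : Subgroup SL2C} [DiscreteTopology Γ]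

lemma annulus_bound (μ : Measure (SL2C ⧸ Γ)) (hRadon : IsRadon μ)
    (K : Set (SL2C ⧸ Γ)) (hK : IsCompact K) (r R : ℝ) (hr : 0 < r) :
    ∃ M : ℝ≥0∞, M ≠ ⊤ ∧ ∀ a : ℂˣ, ‖(a : ℂ)‖ ∈ Set.Icc r R →
      μ ((dMat a)⁻¹ • K) ≤ M := by
  set Ann : Set ℂ := (fun w : ℂ => ‖w‖) ⁻¹' Set.Icc r R with hAnnDef
  have hAnnne : ∀ w ∈ Ann, w ≠ 0 := by
    intro w hw h0
    rw [h0] at hw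
    simp only [hAnnDef, Set.mem_preimage, norm_zero, Set.mem_Icc] at hw
    linarith [hw.1]
  have hAnn : IsCompact Ann := by
    apply Metric.isCompact_of_isClosed_isBounded
    · exact IsClosed.preimage continuous_norm isClosed_Icc
    · apply Bornology.IsBounded.subset (Metric.isBounded_closedBall (x := (0:ℂ)) (r := R))
      intro w hw
      rw [Metric.mem_closedBall, dist_zero_right]
      exact hw.2
  set φ : ℂ → SL2C := fun w => if h : w = 0 then 1 else dMat (Units.mk0 w h) with hφdef
  have hφval : ∀ w ∈ Ann, ((φ w : SL2C) : Matrix (Fin 2) (Fin 2) ℂ) = !![w, 0; 0, w⁻¹] := by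
    intro w hw
    simp only [hφdef]
    rw [dif_neg (hAnnne w hw)]
    simp only [hφdef, dif_neg (hAnnne w hw), dMat]
    norm_num [Units.val_inv_eq_inv_val]
  have hφ : ContinuousOn φ Ann := by
    rw [sl2c_embedding.toIsInducing.continuousOn_iff]
    apply ContinuousOn.congr (f := fun w : ℂ => !![w, 0; 0, w⁻¹])
    · have houter : Continuous (fun p : ℂ × ℂ => !![p.1, 0; 0, p.2]) := by
        refine continuous_matrix fun i j => ?_
        fin_cases i <;> fin_cases j <;> simp <;>
          first
          | exact continuous_fst
          | exact continuous_snd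
          | exact continuous_const
      have hinner : ContinuousOn (fun w : ℂ => (w, w⁻¹)) Ann :=
        ContinuousOn.prodMk continuousOn_id (continuousOn_id.inv₀ hAnnne)
      exact houter.comp_continuousOn hinner
    · intro w hw
      exact hφval w hw
  set bigC : Set (SL2C ⧸ Γ) :=
    (fun p : ℂ × (SL2C ⧸ Γ) => (φ p.1)⁻¹ • p.2) '' (Ann ×ˢ K) with hbigCdef
  have hbigC : IsCompact bigC := by
    apply IsCompact.image_of_continuousOn (hAnn.prod hK)
    have h1 : ContinuousOn (fun p : ℂ × (SL2C ⧸ Γ) => (φ p.1)⁻¹) (Ann ×ˢ K) := by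
      have : ContinuousOn (fun p : ℂ × (SL2C ⧸ Γ) => φ p.1) (Ann ×ˢ K) :=
        hφ.comp continuousOn_fst (fun p hp => hp.1)
      exact continuous_inv.comp_continuousOn this
    exact h1.smul continuousOn_snd
  refine ⟨μ bigC, (hRadon.1 _ hbigC).ne, ?_⟩
  intro a ha
  apply measure_mono
  intro x hx
  obtain ⟨k, hk, rfl⟩ := hx
  refine ⟨((a : ℂ), k), ⟨ha, hk⟩, ?_⟩
  have hφa : φ ((a : ℂ)) = dMat a := by
    simp only [hφdef, dif_neg a.ne_zero]
    congr 1
    exact Units.ext rfl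
  simp [hφa]

end Annulus

lemma quot_preimage_smul_set {Γ : Subgroup SL2C} (g : SL2C) (K : Set (SL2C ⧸ Γ)) :
    ((g • ·) : SL2C ⧸ Γ → SL2C ⧸ Γ) ⁻¹' K = g⁻¹ • K := by
  ext x; simp [Set.mem_smul_set_iff_inv_smul_mem]

/-- A U-invariant, U-ergodic Radon measure on SL₂(ℂ)⧸Γ which is
quasi-invariant under the diagonal subgroup D transforms under D by a character:
there is α ∈ ℝ with d_λ•μ = |λ|^{2α} μ for all λ ≠ 0 (d_λ = [[λ,0],[0,λ⁻¹]], whose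
(0,0) entry is λ); in particular μ is invariant under every d_λ with |λ| = 1. -/
theorem diagonal_character_of_quasi_invariance
    (Γ : Subgroup SL2C) [DiscreteTopology Γ]
    (μ : Measure (SL2C ⧸ Γ)) (hRadon : IsRadon μ)
    (hInv : UInvariant μ) (hErg : UErgodic μ)
    (hQI : ∀ d : SL2C, IsDiag d → QuasiInvariantUnder d μ) :
    ∃ α : ℝ,
      (∀ d : SL2C, IsDiag d →
        Measure.map (d • ·) μ = ENNReal.ofReal (‖d.1 0 0‖ ^ (2 * α)) • μ) ∧
      (∀ d : SL2C, IsDiag d → ‖d.1 0 0‖ = 1 →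
        Measure.map (d • ·) μ = μ) := by
  by_cases hμ0 : μ = 0
  · refine ⟨0, fun d _ => ?_, fun d _ _ => ?_⟩ <;> simp [hμ0]
  -- the character
  choose c hc0 hctop hmap using fun a : ℂˣ =>
    propor μ hRadon hInv hErg hμ0 a (hQI _ (isDiag_dMat a))
  -- a compact set of positive finite measure
  obtain ⟨K, hK, hKpos⟩ : ∃ K : Set (SL2C ⧸ Γ), IsCompact K ∧ 0 < μ K := by
    by_contra h
    push_neg at h
    have huniv : μ Set.univ = 0 := by
      rw [hRadon.2 Set.univ MeasurableSet.univ]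
      simp only [ENNReal.iSup_eq_zero]
      intro K
      by_cases hK : IsCompact K
      · simp only [hK, iSup_pos]
        intro _
        simpa using (h K hK)
      · simp [hK]
    exact hμ0 (Measure.measure_univ_eq_zero.1 huniv)
  have hKfin : μ K < ⊤ := hRadon.1 K hK
  -- cancellation
  have hcancel : ∀ {x y : ℝ≥0∞}, x • μ = y • μ → x = y := by
    intro x y hxy
    have h1 : x * μ K = y * μ K := by
      have := congrArg (fun m : Measure (SL2C ⧸ Γ) => m K) hxy
      simpa [Measure.smul_apply, smul_eq_mul] using this
    exact (ENNReal.mul_left_inj hKpos.ne' hKfin.ne).1 h1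
  -- multiplicativity
  have hmul : ∀ a b : ℂˣ, c (a * b) = c a * c b := by
    intro a b
    apply hcancel
    rw [← hmap (a * b), ← dMat_mul, ← map_smul_map, hmap b, Measure.map_smul, hmap a,
      smul_smul, mul_comm]
  have hone : c 1 = 1 := by
    apply hcancel
    rw [← hmap 1, one_smul]
    have hd1 : dMat 1 = 1 := by
      ext i j; fin_cases i <;> fin_cases j <;> simp [dMat]
    rw [hd1]
    have : ((1 : SL2C) • · : SL2C ⧸ Γ → SL2C ⧸ Γ) = id := by
      funext x; simp
    rw [this, Measure.map_id]
  have hpow : ∀ (a : ℂˣ) (n : ℕ), c (a ^ n) = c a ^ n := by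
    intro a n
    induction n with
    | zero => simpa using hone
    | succ n ih => rw [pow_succ, hmul, ih, pow_succ]
  have hinvc : ∀ a : ℂˣ, c a * c a⁻¹ = 1 := by
    intro a
    rw [← hmul, mul_inv_cancel, hone]
  -- the annulus bound
  obtain ⟨M, hMfin, hM⟩ := annulus_bound μ hRadon K hK (Real.exp (-1)) (Real.exp 1)
    (Real.exp_pos _)
  set B : ℝ≥0∞ := M / μ K with hBdef
  have hBfin : B ≠ ⊤ := (ENNReal.div_lt_top hMfin hKpos.ne').ne
  have hcB : ∀ a : ℂˣ, ‖(a : ℂ)‖ ∈ Set.Icc (Real.exp (-1)) (Real.exp 1) →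
      c a ≤ B := by
    intro a ha
    rw [hBdef, ENNReal.le_div_iff_mul_le (Or.inl hKpos.ne') (Or.inl hKfin.ne)]
    have h1 : c a * μ K = μ ((dMat a)⁻¹ • K) := by
      have h2 := congrArg (fun m : Measure (SL2C ⧸ Γ) => m K) (hmap a)
      simp only [Measure.smul_apply, smul_eq_mul] at h2
      rw [← h2, Measure.map_apply (measurable_smul_quot _) hK.isClosed.measurableSet,
        quot_preimage_smul_set]
    rw [h1]
    exact hM a ha
  have habs_one_mem : (1 : ℝ) ∈ Set.Icc (Real.exp (-1)) (Real.exp 1) := by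
    constructor
    · calc Real.exp (-1) ≤ Real.exp 0 := Real.exp_le_exp.2 (by norm_num)
      _ = 1 := Real.exp_zero
    · calc (1:ℝ) = Real.exp 0 := Real.exp_zero.symm
      _ ≤ Real.exp 1 := Real.exp_le_exp.2 (by norm_num)
  -- circle triviality
  have hcirc : ∀ a : ℂˣ, ‖(a : ℂ)‖ = 1 → c a = 1 := by
    intro a ha
    have hle : ∀ b : ℂˣ, ‖(b : ℂ)‖ = 1 → c b ≤ 1 := by
      intro b hb
      by_contra hgt
      push_neg at hgt
      have hy : 1 < (c b).toReal := by
        have := ENNReal.toReal_strict_mono (hctop b) hgt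
        simpa using this
      obtain ⟨n, hn⟩ := pow_unbounded_of_one_lt (B.toReal) hy
      have hbn : c (b ^ n) ≤ B := by
        apply hcB
        rw [Units.val_pow_eq_pow_val, norm_pow, hb, one_pow]
        exact habs_one_mem
      rw [hpow] at hbn
      have : (c b ^ n).toReal ≤ B.toReal := ENNReal.toReal_mono hBfin hbn
      rw [ENNReal.toReal_pow] at this
      linarith
    have h1 := hle a ha
    have h2 : ‖((a⁻¹ : ℂˣ) : ℂ)‖ = 1 := by
      rw [Units.val_inv_eq_inv_val, norm_inv, ha, inv_one]
    have h3 := hle a⁻¹ h2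
    refine le_antisymm h1 ?_
    calc (1 : ℝ≥0∞) = c a * c a⁻¹ := (hinvc a).symm
    _ ≤ c a * 1 := by gcongr
    _ = c a := mul_one _
  -- the radial function
  set hfun : ℝ → ℝ := fun s => Real.log ((c (unitExp s)).toReal) with hfundef
  have hcpos : ∀ a : ℂˣ, 0 < (c a).toReal := fun a =>
    ENNReal.toReal_pos (hc0 a) (hctop a)
  have hadd : ∀ s t : ℝ, hfun (s + t) = hfun s + hfun t := by
    intro s t
    simp only [hfundef, unitExp_add, hmul, ENNReal.toReal_mul]
    exact Real.log_mul (hcpos _).ne' (hcpos _).ne'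
  have hB1 : (1 : ℝ≥0∞) ≤ B := by
    rw [← hone]
    apply hcB
    simpa using habs_one_mem
  have hb1 : 1 ≤ B.toReal := by
    have := ENNReal.toReal_mono hBfin hB1
    simpa using this
  have hbpos : 0 < B.toReal := by linarith
  have hcIcc : ∀ s : ℝ, s ∈ Set.Icc (-1 : ℝ) 1 → c (unitExp s) ≤ B := by
    intro s hs
    apply hcB
    rw [abs_unitExp]
    exact ⟨Real.exp_le_exp.2 hs.1, Real.exp_le_exp.2 hs.2⟩
  have hbound : ∀ s ∈ Set.Icc (0:ℝ) 1, |hfun s| ≤ Real.log (B.toReal) := by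
    intro s hs
    have hs' : s ∈ Set.Icc (-1 : ℝ) 1 := ⟨by linarith [hs.1], hs.2⟩
    have hs'' : -s ∈ Set.Icc (-1 : ℝ) 1 := ⟨by linarith [hs.2], by linarith [hs.1]⟩
    have hup : (c (unitExp s)).toReal ≤ B.toReal :=
      ENNReal.toReal_mono hBfin (hcIcc s hs')
    have hup' : (c (unitExp (-s))).toReal ≤ B.toReal :=
      ENNReal.toReal_mono hBfin (hcIcc _ hs'')
    have hprod : (c (unitExp s)).toReal * (c (unitExp (-s))).toReal = 1 := by
      rw [← ENNReal.toReal_mul, ← hmul, ← unitExp_add, add_neg_cancel, unitExp_zero, hone,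
        ENNReal.toReal_one]
    rw [abs_le]
    constructor
    · have hlog : Real.log ((c (unitExp (-s))).toReal) ≤ Real.log (B.toReal) :=
        Real.log_le_log (hcpos _) hup'
      have hneg : hfun s = - Real.log ((c (unitExp (-s))).toReal) := by
        simp only [hfundef]
        have : (c (unitExp s)).toReal = ((c (unitExp (-s))).toReal)⁻¹ := by
          have hy := (hcpos (unitExp (-s))).ne'
          field_simp
          linear_combination hprod
        rw [this, Real.log_inv]
      rw [hneg]
      linarith
    · exact Real.log_le_log (hcpos _) hup
  have hlin := additive_bounded_linear hfun hadd (Real.log (B.toReal)) hbound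
  set α : ℝ := hfun 1 / 2 with hαdef
  -- the key formula
  have hkey : ∀ a : ℂˣ, c a = ENNReal.ofReal (‖(a : ℂ)‖ ^ (2 * α)) := by
    intro a
    set m : ℝ := ‖(a : ℂ)‖ with hmdef
    have hm : 0 < m := norm_pos_iff.2 a.ne_zero
    set p : ℂˣ := (unitExp (Real.log m))⁻¹ * a with hpdef
    have hpabs : ‖(p : ℂ)‖ = 1 := by
      rw [hpdef, Units.val_mul, norm_mul, Units.val_inv_eq_inv_val, norm_inv, abs_unitExp,
        Real.exp_log hm, ← hmdef]
      field_simp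
    have hfact : a = unitExp (Real.log m) * p := by
      rw [hpdef, mul_inv_cancel_left]
    have hca : c a = c (unitExp (Real.log m)) := by
      rw [hfact, hmul, hcirc p hpabs, mul_one]
    have htor : (c (unitExp (Real.log m))).toReal = m ^ (2 * α) := by
      have hl : Real.log ((c (unitExp (Real.log m))).toReal) = Real.log m * (2 * α) := by
        have := hlin (Real.log m)
        simp only [hfundef] at this
        rw [this, hαdef]
        ring
      have := congrArg Real.exp hl
      rw [Real.exp_log (hcpos _)] at this
      rw [this, Real.rpow_def_of_pos hm]
    rw [hca, ← htor, ENNReal.ofReal_toReal (hctop _)]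
  refine ⟨α, ?_, ?_⟩
  · intro d hd
    obtain ⟨a, rfl⟩ := isDiag_iff.1 hd
    have hentry : (dMat a).1 0 0 = (a : ℂ) := by simp [dMat]
    rw [hmap a, hkey a, hentry]
  · intro d hd habs1
    obtain ⟨a, rfl⟩ := isDiag_iff.1 hd
    have hentry : (dMat a).1 0 0 = (a : ℂ) := by simp [dMat]
    rw [hentry] at habs1
    rw [hmap a, hkey a, habs1, Real.one_rpow, ENNReal.ofReal_one, one_smul]
end
end
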